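/- Let Q ∈ SO(3) with tr(Q) > −1. Define the configuration error function Ψ = 2 − √(1 + tr(Q)) and the attitude error vector e_R = (1/(2√(1 + tr Q))) (Q − Qᵀ)∨, where (·)∨ is the inverse of the hat map. Then ‖e_R‖² ≤ Ψ ≤ 2‖e_R‖². -/
import Mathlib


open Matrix

noncomputable def enorm3 (v : Fin 3 → ℝ) : ℝ := Real.sqrt (∑ i, v i ^ 2)

def vee (M : Matrix (Fin 3) (Fin 3) ℝ) : Fin 3 → ℝ := ![M 2 1, M 0 2, M 1 0]

theorem config_error_sandwich (Q : Matrix (Fin 3) (Fin 3) ℝ)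
    (hQ : Qᵀ * Q = 1) (hQdet : Q.det = 1) (htr : -1 < Q.trace)
    (Ψ : ℝ) (hΨ : Ψ = 2 - Real.sqrt (1 + Q.trace))
    (eR : Fin 3 → ℝ)
    (heR : eR = (1 / (2 * Real.sqrt (1 + Q.trace))) • vee (Q - Qᵀ)) :
    enorm3 eR ^ 2 ≤ Ψ ∧ Ψ ≤ 2 * enorm3 eR ^ 2 := by
  have hQinv : Q * Qᵀ = 1 := mul_eq_one_comm.mp hQ
  have hadj : Q.adjugate = Qᵀ := by
    calc Q.adjugate = Q.adjugate * (Q * Qᵀ) := by rw [hQinv, mul_one]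
    _ = (Q.adjugate * Q) * Qᵀ := by rw [mul_assoc]
    _ = Qᵀ := by rw [Matrix.adjugate_mul, hQdet, one_smul, one_mul]
  -- column norms
  have h0 : (Qᵀ * Q) 0 0 = (1 : Matrix (Fin 3) (Fin 3) ℝ) 0 0 := by rw [hQ]
  have h1 : (Qᵀ * Q) 1 1 = (1 : Matrix (Fin 3) (Fin 3) ℝ) 1 1 := by rw [hQ]
  have h2 : (Qᵀ * Q) 2 2 = (1 : Matrix (Fin 3) (Fin 3) ℝ) 2 2 := by rw [hQ]
  simp only [Matrix.mul_apply, Fin.sum_univ_three, Matrix.transpose_apply,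
    Matrix.one_apply_eq] at h0 h1 h2
  -- entry = cofactor (diagonal)
  have e0 : Q 1 1 * Q 2 2 - Q 1 2 * Q 2 1 = Q 0 0 := by
    have h := congrFun (congrFun hadj 0) 0
    rw [Matrix.adjugate_fin_three] at h; simpa using h
  have e1 : Q 0 0 * Q 2 2 - Q 0 2 * Q 2 0 = Q 1 1 := by
    have h := congrFun (congrFun hadj 1) 1
    rw [Matrix.adjugate_fin_three] at h; simpa using h
  have e2 : Q 0 0 * Q 1 1 - Q 0 1 * Q 1 0 = Q 2 2 := by
    have h := congrFun (congrFun hadj 2) 2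
    rw [Matrix.adjugate_fin_three] at h; simpa using h
  clear hadj hQ hQinv hQdet
  set t := Q.trace with ht
  have htr3 : t = Q 0 0 + Q 1 1 + Q 2 2 := Matrix.trace_fin_three Q
  -- key identity
  have key : (Q 2 1 - Q 1 2)^2 + (Q 0 2 - Q 2 0)^2 + (Q 1 0 - Q 0 1)^2
      = (3 - t) * (1 + t) := by
    rw [htr3]; linear_combination h0 + h1 + h2 + 2*e0 + 2*e1 + 2*e2
  have h1t : (0:ℝ) < 1 + t := by linarith
  set s := Real.sqrt (1 + t) with hs
  have hs2 : s ^ 2 = 1 + t := Real.sq_sqrt h1t.le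
  have hs0 : 0 < s := Real.sqrt_pos.mpr h1t
  -- t ≤ 3 since each diagonal entry ≤ 1
  have aux : ∀ a b c : ℝ, a * a + b * b + c * c = 1 → a ≤ 1 := by
    intro a b c h
    nlinarith [sq_nonneg b, sq_nonneg c, sq_nonneg (a - 1)]
  have hd0 : Q 0 0 ≤ 1 := aux _ _ _ h0
  have hd1 : Q 1 1 ≤ 1 := by
    have := aux (Q 1 1) (Q 0 1) (Q 2 1); apply this; linarith [h1]
  have hd2 : Q 2 2 ≤ 1 := by
    have := aux (Q 2 2) (Q 0 2) (Q 1 2); apply this; linarith [h2]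
  have ht3 : t ≤ 3 := by rw [htr3]; linarith
  have hsle : s ≤ 2 := by
    rw [hs, show (2:ℝ) = Real.sqrt (2^2) from (Real.sqrt_sq (by norm_num)).symm]
    apply Real.sqrt_le_sqrt; linarith
  -- compute enorm3 eR ^ 2
  have hsum : ∑ i, eR i ^ 2 = (4 - s^2) / 4 := by
    have : ∑ i, eR i ^ 2 = (1 / (2*s))^2 *
        ((Q 2 1 - Q 1 2)^2 + (Q 0 2 - Q 2 0)^2 + (Q 1 0 - Q 0 1)^2) := by
      simp only [heR, Fin.sum_univ_three, Pi.smul_apply, smul_eq_mul, vee,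
        Matrix.sub_apply, Matrix.transpose_apply, Matrix.cons_val_zero,
        Matrix.cons_val_one, Matrix.head_cons, Matrix.cons_val_two, Matrix.tail_cons]
      ring
    rw [this, key, show (3:ℝ) - t = 4 - s^2 by linarith [hs2],
      show (1:ℝ) + t = s^2 by linarith [hs2]]
    have hsne : s ≠ 0 := ne_of_gt hs0
    field_simp
    ring
  have henorm : enorm3 eR ^ 2 = (4 - s^2) / 4 := by
    rw [enorm3, Real.sq_sqrt (by positivity : (0:ℝ) ≤ ∑ i, eR i ^ 2), hsum]
  rw [henorm, hΨ]
  clear_value s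
  clear h0 h1 h2 e0 e1 e2 heR hΨ htr3 key hsum henorm aux hd0 hd1 hd2 ht3 htr ht h1t hs
  constructor <;> nlinarith [hs2, hs0, hsle]
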